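/- Let T > 0 and let M : [0,T] → Matrix (2×2, ℝ) be a continuous path of real 2×2 matrices with det M(t) = 1 for all t ∈ [0,T] (a path in Sp(2) = SL(2,ℝ)) and M(0) = I. For every nonzero u ∈ ℝ² there exists a continuous function θ_u : [0,T] → ℝ such that M(t)u = ‖M(t)u‖ (cos θ_u(t), sin θ_u(t)) for all t, and the quantity Δ_M(u) = (θ_u(T) − θ_u(0))/(2π) does not depend on the choice of such θ_u. Moreover, the image of the resulting rotation function Δ_M : ℝ² ∖ {0} → ℝ is a compact interval whose length is strictly less than 1/2. -/

import Mathlib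

open Set Complex

section helpers

noncomputable def pathLift (f : ℝ × ℝ → ℂ) (c : ℝ) (n : ℕ) (t s : ℝ) : ℝ :=
  s + ∑ j ∈ Finset.range n,
    Complex.arg (f (min t (((j : ℝ) + 1) * c), s) / f (min t ((j : ℝ) * c), s))

lemma pathLift_zero (f : ℝ × ℝ → ℂ) (c : ℝ) (hc : 0 ≤ c) (n : ℕ)
    (hne : ∀ p, f p ≠ 0) (s : ℝ) : pathLift f c n 0 s = s := by
  unfold pathLift
  have : ∀ j ∈ Finset.range n,
      Complex.arg (f (min 0 (((j : ℝ) + 1) * c), s) / f (min 0 ((j : ℝ) * c), s)) = 0 := by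
    intro j _
    have h1 : min (0:ℝ) (((j : ℝ) + 1) * c) = 0 := min_eq_left (by positivity)
    have h2 : min (0:ℝ) ((j : ℝ) * c) = 0 := min_eq_left (by positivity)
    rw [h1, h2, div_self (hne _), Complex.arg_one]
  rw [Finset.sum_congr rfl this]
  simp

lemma pathLift_pi (f : ℝ × ℝ → ℂ) (c : ℝ) (n : ℕ)
    (hshift : ∀ t s : ℝ, f (t, s + Real.pi) = - f (t, s)) (t s : ℝ) :
    pathLift f c n t (s + Real.pi) = pathLift f c n t s + Real.pi := by
  unfold pathLift
  have : ∀ j ∈ Finset.range n,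
      Complex.arg (f (min t (((j : ℝ) + 1) * c), s + Real.pi) / f (min t ((j : ℝ) * c), s + Real.pi))
        = Complex.arg (f (min t (((j : ℝ) + 1) * c), s) / f (min t ((j : ℝ) * c), s)) := by
    intro j _
    rw [hshift, hshift, neg_div_neg_eq]
  rw [Finset.sum_congr rfl this]
  ring

lemma pathLift_continuous (f : ℝ × ℝ → ℂ) (c : ℝ) (hc : 0 ≤ c) (n : ℕ)
    (hf : Continuous f) (hne : ∀ p, f p ≠ 0)
    (hstep : ∀ t t' s : ℝ, |t' - t| ≤ c →
      0 < (f (t', s) * (starRingEnd ℂ) (f (t, s))).re) :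
    Continuous fun p : ℝ × ℝ => pathLift f c n p.1 p.2 := by
  unfold pathLift
  refine continuous_snd.add (continuous_finset_sum _ fun j _ => ?_)
  have hg : ∀ (a : ℝ), Continuous fun p : ℝ × ℝ => f (min p.1 a, p.2) :=
    fun a => hf.comp ((continuous_fst.min continuous_const).prodMk continuous_snd)
  have hinner : Continuous fun p : ℝ × ℝ =>
      f (min p.1 (((j : ℝ) + 1) * c), p.2) / f (min p.1 ((j : ℝ) * c), p.2) :=
    (hg _).div (hg _) fun p => hne _
  refine continuous_iff_continuousAt.2 fun p => ?_
  refine (Complex.continuousAt_arg ?_).comp hinner.continuousAt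
  rw [Complex.mem_slitPlane_iff]
  left
  have hd : |min p.1 (((j : ℝ) + 1) * c) - min p.1 ((j : ℝ) * c)| ≤ c := by
    calc |min p.1 (((j : ℝ) + 1) * c) - min p.1 ((j : ℝ) * c)|
        ≤ max |p.1 - p.1| |((j : ℝ) + 1) * c - (j : ℝ) * c| := abs_min_sub_min_le_max _ _ _ _
      _ ≤ c := by
          rw [sub_self, abs_zero, max_le_iff]
          constructor
          · exact hc
          · have h : ((j : ℝ) + 1) * c - (j : ℝ) * c = c := by ring
            rw [h, _root_.abs_of_nonneg hc]
  have h1 := hstep _ _ p.2 hd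
  rw [Complex.mul_re, Complex.conj_re, Complex.conj_im] at h1
  rw [Complex.div_re, ← add_div]
  apply div_pos
  · nlinarith [h1]
  · exact Complex.normSq_pos.2 (hne _)

lemma pathLift_spec (f : ℝ × ℝ → ℂ) (c : ℝ) (hc : 0 ≤ c) (n : ℕ)
    (hne : ∀ p, f p ≠ 0)
    (h0 : ∀ s : ℝ, Complex.exp (s * Complex.I) = f (0, s) / ‖f (0, s)‖)
    (s : ℝ) :
    ∀ k ≤ n, ∀ t ∈ Icc (0:ℝ) ((k : ℝ) * c),
      Complex.exp (pathLift f c n t s * Complex.I) = f (t, s) / ‖f (t, s)‖ := by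
  intro k
  induction k with
  | zero =>
    intro _ t ht
    simp only [Nat.cast_zero, zero_mul, Icc_self, mem_singleton_iff] at ht
    subst ht
    rw [pathLift_zero f c hc n hne s]
    exact h0 s
  | succ k ih =>
    intro hkn t ht
    have hk : k ≤ n := Nat.le_of_succ_le hkn
    have hkr : (k : ℝ) * c ≤ ((k : ℝ) + 1) * c := by nlinarith
    set t' := min t ((k : ℝ) * c) with ht'def
    have ht'mem : t' ∈ Icc (0:ℝ) ((k : ℝ) * c) :=
      ⟨le_min ht.1 (by positivity), min_le_right _ _⟩
    have htle : t ≤ ((k : ℝ) + 1) * c := by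
      have := ht.2; push_cast at this ⊢; linarith
    have key : pathLift f c n t s = pathLift f c n t' s
        + Complex.arg (f (t, s) / f (t', s)) := by
      unfold pathLift
      have hterm : ∀ j ∈ Finset.range n,
          Complex.arg (f (min t (((j : ℝ) + 1) * c), s) / f (min t ((j : ℝ) * c), s))
            = Complex.arg (f (min t' (((j : ℝ) + 1) * c), s) / f (min t' ((j : ℝ) * c), s))
              + (if j = k then Complex.arg (f (t, s) / f (t', s)) else 0) := by
        intro j _
        rcases lt_trichotomy j k with hj | hj | hj
        · have hj1 : ((j : ℝ) + 1) * c ≤ (k : ℝ) * c := by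
            have : (j : ℝ) + 1 ≤ (k : ℝ) := by exact_mod_cast hj
            nlinarith
          have hj0 : (j : ℝ) * c ≤ (k : ℝ) * c := by
            have : (j : ℝ) ≤ (k : ℝ) := by exact_mod_cast hj.le
            nlinarith
          have e1 : min t' (((j : ℝ) + 1) * c) = min t (((j : ℝ) + 1) * c) := by
            rw [ht'def, min_assoc, min_eq_right hj1]
          have e0 : min t' ((j : ℝ) * c) = min t ((j : ℝ) * c) := by
            rw [ht'def, min_assoc, min_eq_right hj0]
          rw [e1, e0, if_neg hj.ne]
          ring
        · subst hj
          have e1 : min t (((j : ℝ) + 1) * c) = t := min_eq_left htle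
          have e1' : min t' (((j : ℝ) + 1) * c) = t' :=
            min_eq_left (le_trans (min_le_right _ _) hkr)
          have e0' : min t' ((j : ℝ) * c) = t' := min_eq_left (min_le_right _ _)
          rw [e1, e1', e0', div_self (hne _), Complex.arg_one, if_pos rfl]
          ring
        · have hj0 : ((k : ℝ) + 1) * c ≤ (j : ℝ) * c := by
            have : (k : ℝ) + 1 ≤ (j : ℝ) := by exact_mod_cast hj
            nlinarith
          have hj1 : ((k : ℝ) + 1) * c ≤ ((j : ℝ) + 1) * c := by
            have h2 : (k : ℝ) + 1 ≤ (j : ℝ) + 1 := by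
              have : (k : ℝ) ≤ (j : ℝ) := by exact_mod_cast hj.le
              linarith
            nlinarith
          have ht'le : t' ≤ t := min_le_left _ _
          have e1 : min t (((j : ℝ) + 1) * c) = t := min_eq_left (le_trans htle hj1)
          have e0 : min t ((j : ℝ) * c) = t := min_eq_left (le_trans htle hj0)
          have e1' : min t' (((j : ℝ) + 1) * c) = t' :=
            min_eq_left (le_trans ht'le (le_trans htle hj1))
          have e0' : min t' ((j : ℝ) * c) = t' :=
            min_eq_left (le_trans ht'le (le_trans htle hj0))
          rw [e1, e0, e1', e0', div_self (hne _), div_self (hne _), Complex.arg_one,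
            if_neg hj.ne']
          ring
      rw [Finset.sum_congr rfl hterm, Finset.sum_add_distrib,
        Finset.sum_ite_eq' (Finset.range n) k, if_pos (Finset.mem_range.2 (by omega))]
      ring
    have ihe := ih hk t' ht'mem
    have hw : f (t, s) / f (t', s) ≠ 0 := div_ne_zero (hne _) (hne _)
    have hexp : Complex.exp ((Complex.arg (f (t, s) / f (t', s)) : ℂ) * Complex.I)
        = (f (t, s) / f (t', s)) / (‖f (t, s) / f (t', s)‖ : ℂ) := by
      rw [eq_div_iff (by exact_mod_cast (norm_ne_zero_iff.mpr hw))]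
      rw [mul_comm]
      exact Complex.norm_mul_exp_arg_mul_I _
    rw [key]
    push_cast
    rw [add_mul, Complex.exp_add, ihe, hexp, norm_div]
    have ha : (‖f (t, s)‖ : ℂ) ≠ 0 := by
      exact_mod_cast norm_ne_zero_iff.mpr (hne (t, s))
    have ha' : (‖f (t', s)‖ : ℂ) ≠ 0 := by
      exact_mod_cast norm_ne_zero_iff.mpr (hne (t', s))
    push_cast
    have hft' := hne (t', s)
    field_simp

lemma exp_eq_exp_int (x y : ℝ) (h : Complex.exp (x * Complex.I) = Complex.exp (y * Complex.I)) :
    ∃ m : ℤ, x - y = m * (2 * Real.pi) := by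
  obtain ⟨m, hm⟩ := Complex.exp_eq_exp_iff_exists_int.mp h
  refine ⟨m, ?_⟩
  have h2 : (x : ℂ) * Complex.I = ((y + m * (2 * Real.pi) : ℝ) : ℂ) * Complex.I := by
    push_cast
    linear_combination hm
  have h3 := mul_right_cancel₀ Complex.I_ne_zero h2
  have h4 : x = y + (m : ℝ) * (2 * Real.pi) := by exact_mod_cast h3
  linarith

lemma arglift_unique (T : ℝ) (hT : 0 < T) (θ θ' : ℝ → ℝ)
    (hθ : ContinuousOn θ (Icc 0 T)) (hθ' : ContinuousOn θ' (Icc 0 T))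
    (h : ∀ t ∈ Icc (0:ℝ) T,
      Complex.exp (θ t * Complex.I) = Complex.exp (θ' t * Complex.I)) :
    θ T - θ 0 = θ' T - θ' 0 := by
  have h2pi : (0:ℝ) < 2 * Real.pi := by positivity
  set g : ℝ → ℝ := fun t => (θ t - θ' t) / (2 * Real.pi) with hg
  have hgc : ContinuousOn g (Icc 0 T) := (hθ.sub hθ').div_const _
  have hint : ∀ t ∈ Icc (0:ℝ) T, ∃ m : ℤ, g t = m := by
    intro t ht
    obtain ⟨m, hm⟩ := exp_eq_exp_int _ _ (h t ht)
    exact ⟨m, by rw [hg]; field_simp [hm]; linarith [hm]⟩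
  have h0T : (0:ℝ) ∈ Icc (0:ℝ) T := by constructor <;> linarith
  have hTT : T ∈ Icc (0:ℝ) T := by constructor <;> linarith
  obtain ⟨m0, hm0⟩ := hint 0 h0T
  obtain ⟨mT, hmT⟩ := hint T hTT
  have hgeq : g T = g 0 := by
    by_contra hne
    have hmm : m0 ≠ mT := by
      intro hcon; exact hne (by rw [hm0, hmT, hcon])
    set y : ℝ := (min (m0 : ℝ) (mT : ℝ)) + 1/2 with hy
    have hminmax : (min (m0 : ℝ) (mT : ℝ)) + 1 ≤ max (m0 : ℝ) (mT : ℝ) := by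
      rcases lt_or_gt_of_ne hmm with hlt | hlt
      · rw [min_eq_left, max_eq_right] <;> [skip; exact_mod_cast hlt.le; exact_mod_cast hlt.le]
        have : (m0 : ℝ) + 1 ≤ mT := by exact_mod_cast hlt
        linarith
      · rw [min_eq_right, max_eq_left] <;> [skip; exact_mod_cast hlt.le; exact_mod_cast hlt.le]
        have : (mT : ℝ) + 1 ≤ m0 := by exact_mod_cast hlt
        linarith
    have hymem : y ∈ uIcc (g 0) (g T) := by
      rw [hm0, hmT, Set.uIcc, Set.mem_Icc]
      constructor
      · show min (m0:ℝ) (mT:ℝ) ≤ y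
        rw [hy]; linarith
      · show y ≤ max (m0:ℝ) (mT:ℝ)
        rw [hy]; linarith
    have huIcc : uIcc (0:ℝ) T = Icc 0 T := uIcc_of_le hT.le
    have hsub := intermediate_value_uIcc (f := g) (a := (0:ℝ)) (b := T)
      (by rw [huIcc]; exact hgc)
    obtain ⟨τ, hτ, hτy⟩ := hsub hymem
    rw [huIcc] at hτ
    obtain ⟨m', hm'⟩ := hint τ hτ
    have hcast : ((min m0 mT : ℤ) : ℝ) = min (m0 : ℝ) (mT : ℝ) := by
      exact_mod_cast Int.cast_min
    have heq : (2 * m' : ℝ) = 2 * ((min m0 mT : ℤ) : ℝ) + 1 := by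
      rw [hcast]
      have : (m' : ℝ) = y := by rw [← hm', hτy]
      rw [hy] at this
      linarith
    have heqz : (2 * m' : ℤ) = 2 * (min m0 mT) + 1 := by exact_mod_cast heq
    omega
  have : θ T - θ' T = θ 0 - θ' 0 := by
    have h5 := hgeq
    rw [hg] at h5
    field_simp at h5
    linarith
  linarith

lemma mulVec_entry (A : Matrix (Fin 2) (Fin 2) ℝ) (v : Fin 2 → ℝ) :
    A.mulVec v 0 = A 0 0 * v 0 + A 0 1 * v 1 ∧
    A.mulVec v 1 = A 1 0 * v 0 + A 1 1 * v 1 := by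
  constructor <;> simp [Matrix.mulVec, dotProduct, Fin.sum_univ_two]

lemma mulVec_ne_zero (A : Matrix (Fin 2) (Fin 2) ℝ) (hA : A.det = 1) (v : Fin 2 → ℝ)
    (hv : v ≠ 0) : ¬(A.mulVec v 0 = 0 ∧ A.mulVec v 1 = 0) := by
  rw [Matrix.det_fin_two] at hA
  rintro ⟨h0, h1⟩
  rw [(mulVec_entry A v).1] at h0
  rw [(mulVec_entry A v).2] at h1
  apply hv
  funext i
  fin_cases i
  · show v 0 = 0
    linear_combination A 1 1 * h0 - A 0 1 * h1 - v 0 * hA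
  · show v 1 = 0
    linear_combination A 0 0 * h1 - A 1 0 * h0 - v 1 * hA

lemma sq_add_sq_pos_of_ne {x y : ℝ} (h : ¬(x = 0 ∧ y = 0)) : 0 < x ^ 2 + y ^ 2 := by
  rcases not_and_or.mp h with h | h
  · have : 0 < x ^ 2 := by positivity
    nlinarith [sq_nonneg y]
  · have : 0 < y ^ 2 := by positivity
    nlinarith [sq_nonneg x]

lemma arglift_exp {x y θ : ℝ} (hxy : ¬(x = 0 ∧ y = 0))
    (hx : x = Real.sqrt (x ^ 2 + y ^ 2) * Real.cos θ)
    (hy : y = Real.sqrt (x ^ 2 + y ^ 2) * Real.sin θ) :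
    Complex.exp (θ * Complex.I)
      = (x + y * Complex.I) / (Real.sqrt (x ^ 2 + y ^ 2) : ℝ) := by
  set R := Real.sqrt (x ^ 2 + y ^ 2) with hR
  have hpos : 0 < R := Real.sqrt_pos.2 (sq_add_sq_pos_of_ne hxy)
  have hne : ((R : ℝ) : ℂ) ≠ 0 := by exact_mod_cast hpos.ne'
  rw [Complex.exp_mul_I, eq_div_iff hne]
  rw [hx, hy]
  push_cast [← Complex.ofReal_cos, ← Complex.ofReal_sin]
  ring

end helpers


/-- `θ` is a continuous lift of the argument of `t ↦ M(t) u` on `[0,T]`: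
`M(t)u = ‖M(t)u‖ (cos θ(t), sin θ(t))`, where `‖·‖` is the Euclidean norm. -/
def IsArgLift (M : ℝ → Matrix (Fin 2) (Fin 2) ℝ) (T : ℝ) (u : Fin 2 → ℝ)
    (θ : ℝ → ℝ) : Prop :=
  ContinuousOn θ (Set.Icc 0 T) ∧
  ∀ t ∈ Set.Icc 0 T,
    ((M t).mulVec u 0 =
      Real.sqrt (((M t).mulVec u 0) ^ 2 + ((M t).mulVec u 1) ^ 2) * Real.cos (θ t)) ∧
    ((M t).mulVec u 1 =
      Real.sqrt (((M t).mulVec u 0) ^ 2 + ((M t).mulVec u 1) ^ 2) * Real.sin (θ t))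

/-- The rotation function of a continuous path in `Sp(2) = SL(2,ℝ)` starting at the
identity: every nonzero vector admits a continuous argument lift, the total rotation
`Δ_M(u) = (θ_u(T) − θ_u(0))/2π` is independent of the choice of lift, and the image
of `Δ_M` on `ℝ² ∖ {0}` is a compact interval of length strictly less than `1/2`. -/
theorem rotation_interval_of_symplectic_path
    (T : ℝ) (hT : 0 < T) (M : ℝ → Matrix (Fin 2) (Fin 2) ℝ)
    (hM : ContinuousOn M (Set.Icc 0 T))
    (hdet : ∀ t ∈ Set.Icc 0 T, (M t).det = 1)
    (hM0 : M 0 = 1) :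
    ∃ Δ : (Fin 2 → ℝ) → ℝ,
      (∀ u : Fin 2 → ℝ, u ≠ 0 → ∃ θ : ℝ → ℝ, IsArgLift M T u θ) ∧
      (∀ u : Fin 2 → ℝ, u ≠ 0 → ∀ θ : ℝ → ℝ, IsArgLift M T u θ →
        Δ u = (θ T - θ 0) / (2 * Real.pi)) ∧
      (∃ a b : ℝ, a ≤ b ∧ b - a < 1 / 2 ∧
        Δ '' {u : Fin 2 → ℝ | u ≠ 0} = Set.Icc a b) := by
  have hle := hT.le
  have hπ := Real.pi_pos
  have h2pi : (0:ℝ) < 2 * Real.pi := by positivity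
  -- the clamped path
  set Mc : ℝ → Matrix (Fin 2) (Fin 2) ℝ := fun t => M (projIcc 0 T hle t) with hMcdef
  have hMceq : ∀ t ∈ Icc (0:ℝ) T, Mc t = M t := by
    intro t ht
    simp only [hMcdef]
    rw [projIcc_of_mem hle ht]
  have hMccont : Continuous Mc := by
    have h1 : Continuous fun x : Icc (0:ℝ) T => M x := continuousOn_iff_continuous_restrict.mp hM
    exact h1.comp continuous_projIcc
  have hMcdet : ∀ t, (Mc t).det = 1 := fun t => hdet _ (projIcc 0 T hle t).2
  have hMc0 : Mc 0 = 1 := by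
    have h0m : (0:ℝ) ∈ Icc (0:ℝ) T := ⟨le_rfl, hle⟩
    rw [hMceq 0 h0m, hM0]
  -- the complex-valued family
  set f : ℝ × ℝ → ℂ := fun p =>
    ((Mc p.1 0 0 * Real.cos p.2 + Mc p.1 0 1 * Real.sin p.2 : ℝ) : ℂ) +
    ((Mc p.1 1 0 * Real.cos p.2 + Mc p.1 1 1 * Real.sin p.2 : ℝ) : ℂ) * Complex.I with hfdef
  have hfre : ∀ p : ℝ × ℝ, (f p).re = Mc p.1 0 0 * Real.cos p.2 + Mc p.1 0 1 * Real.sin p.2 := by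
    intro p
    simp only [hfdef, Complex.add_re, Complex.ofReal_re, Complex.mul_re, Complex.ofReal_im,
      Complex.I_re, Complex.I_im]
    ring
  have hfim : ∀ p : ℝ × ℝ, (f p).im = Mc p.1 1 0 * Real.cos p.2 + Mc p.1 1 1 * Real.sin p.2 := by
    intro p
    simp only [hfdef, Complex.add_im, Complex.ofReal_im, Complex.mul_im, Complex.ofReal_re,
      Complex.I_re, Complex.I_im]
    ring
  have hentry : ∀ i j : Fin 2, Continuous fun t => Mc t i j := fun i j =>
    (continuous_apply j).comp ((continuous_apply i).comp hMccont)
  have hfcont : Continuous f := by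
    apply Continuous.add
    · apply Complex.continuous_ofReal.comp
      exact (((hentry 0 0).comp continuous_fst).mul (Real.continuous_cos.comp continuous_snd)).add
        (((hentry 0 1).comp continuous_fst).mul (Real.continuous_sin.comp continuous_snd))
    · apply Continuous.mul _ continuous_const
      apply Complex.continuous_ofReal.comp
      exact (((hentry 1 0).comp continuous_fst).mul (Real.continuous_cos.comp continuous_snd)).add
        (((hentry 1 1).comp continuous_fst).mul (Real.continuous_sin.comp continuous_snd))
  have hfne : ∀ p : ℝ × ℝ, f p ≠ 0 := by
    intro p hp
    have hre : (f p).re = 0 := by rw [hp]; simp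
    have him : (f p).im = 0 := by rw [hp]; simp
    rw [hfre] at hre
    rw [hfim] at him
    have hv : (![Real.cos p.2, Real.sin p.2] : Fin 2 → ℝ) ≠ 0 := by
      intro hv0
      have h1 : Real.cos p.2 = 0 := by have := congrFun hv0 0; simpa using this
      have h2 : Real.sin p.2 = 0 := by have := congrFun hv0 1; simpa using this
      nlinarith [Real.sin_sq_add_cos_sq p.2]
    refine mulVec_ne_zero (Mc p.1) (hMcdet p.1) _ hv ⟨?_, ?_⟩
    · rw [(mulVec_entry _ _).1]; simpa using hre
    · rw [(mulVec_entry _ _).2]; simpa using him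
  have hf0 : ∀ s : ℝ, f (0, s) = Complex.exp (s * Complex.I) := by
    intro s
    have h1 : f (0, s) = (Real.cos s : ℂ) + (Real.sin s : ℂ) * Complex.I := by
      simp only [hfdef, hMc0]
      norm_num [Matrix.one_apply]
    rw [h1, Complex.exp_mul_I, Complex.ofReal_cos, Complex.ofReal_sin]
  have h0 : ∀ s : ℝ, Complex.exp (s * Complex.I) = f (0, s) / ‖f (0, s)‖ := by
    intro s
    rw [hf0, Complex.norm_exp_ofReal_mul_I]
    simp
  have hshift : ∀ t s : ℝ, f (t, s + Real.pi) = - f (t, s) := by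
    intro t s
    simp only [hfdef]
    rw [Real.cos_add_pi, Real.sin_add_pi]
    push_cast
    ring
  have hper2 : ∀ t s : ℝ, ∀ k : ℤ, f (t, s + k * (2 * Real.pi)) = f (t, s) := by
    intro t s k
    simp only [hfdef]
    rw [Real.cos_add_int_mul_two_pi, Real.sin_add_int_mul_two_pi]
  have hproj : ∀ t s : ℝ, f (t, s) = f ((projIcc 0 T hle t : ℝ), s) := by
    intro t s
    have hMcp : Mc ((projIcc 0 T hle t : ℝ)) = Mc t := by
      simp only [hMcdef]
      rw [projIcc_of_mem hle (projIcc 0 T hle t).2]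
    simp only [hfdef, hMcp]
  -- uniform step bound
  have key : ∃ δ > 0, ∀ t ∈ Icc (0:ℝ) T, ∀ t' ∈ Icc (0:ℝ) T,
      ∀ s ∈ Icc (0:ℝ) (2 * Real.pi),
      |t' - t| < δ → 0 < (f (t', s) * (starRingEnd ℂ) (f (t, s))).re := by
    set F : ℝ × ℝ × ℝ → ℝ := fun q => (f (q.2.1, q.2.2) * (starRingEnd ℂ) (f (q.1, q.2.2))).re
      with hF
    have hFcont : Continuous F := by
      apply Complex.continuous_re.comp
      apply Continuous.mul
      · exact hfcont.comp ((continuous_fst.comp continuous_snd).prodMk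
          (continuous_snd.comp continuous_snd))
      · exact Complex.continuous_conj.comp (hfcont.comp (continuous_fst.prodMk
          (continuous_snd.comp continuous_snd)))
    set K : Set (ℝ × ℝ × ℝ) := Icc 0 T ×ˢ (Icc 0 T ×ˢ Icc 0 (2 * Real.pi)) with hK
    have hKc : IsCompact K := isCompact_Icc.prod (isCompact_Icc.prod isCompact_Icc)
    set C : Set (ℝ × ℝ × ℝ) := K ∩ F ⁻¹' (Iic 0) with hC
    have hCc : IsCompact C := hKc.inter_right (isClosed_Iic.preimage hFcont)
    have hFpos : ∀ t s : ℝ, 0 < F (t, t, s) := by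
      intro t s
      have h1 : F (t, t, s) = Complex.normSq (f (t, s)) := by
        rw [hF]
        dsimp only
        rw [Complex.mul_conj, Complex.ofReal_re]
      rw [h1]
      exact Complex.normSq_pos.2 (hfne _)
    rcases eq_empty_or_nonempty C with hCe | hCne
    · refine ⟨1, one_pos, fun t ht t' ht' s hs _ => ?_⟩
      by_contra hcon
      push_neg at hcon
      have : (t, t', s) ∈ C := ⟨⟨ht, ht', hs⟩, hcon⟩
      rw [hCe] at this
      exact this
    · have hGcont : Continuous fun q : ℝ × ℝ × ℝ => |q.2.1 - q.1| :=
        ((continuous_fst.comp continuous_snd).sub continuous_fst).abs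
      obtain ⟨q0, hq0C, hq0min⟩ := hCc.exists_isMinOn hCne hGcont.continuousOn
      obtain ⟨qt, qt', qs⟩ := q0
      refine ⟨|qt' - qt|, ?_, ?_⟩
      · refine abs_pos.mpr (sub_ne_zero.mpr ?_)
        intro hq
        have hle0 : F (qt, qt', qs) ≤ 0 := hq0C.2
        rw [hq] at hle0
        exact absurd hle0 (not_le.mpr (hFpos qt qs))
      · intro t ht t' ht' s hs hlt
        by_contra hcon
        push_neg at hcon
        have hmem : (t, t', s) ∈ C := ⟨⟨ht, ht', hs⟩, hcon⟩
        have := hq0min hmem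
        dsimp at this
        linarith
  obtain ⟨δ, hδ, hδkey⟩ := key
  obtain ⟨n, hn⟩ := exists_nat_gt (T / δ)
  have hTδ : 0 < T / δ := div_pos hT hδ
  have hnpos : 0 < (n : ℝ) := lt_trans hTδ hn
  set c : ℝ := T / n with hcdef
  have hcpos : 0 < c := div_pos hT hnpos
  have hcδ : c < δ := by
    rw [hcdef, div_lt_iff₀ hnpos]
    have := (div_lt_iff₀ hδ).mp hn
    linarith
  have hnc : (n : ℝ) * c = T := by
    rw [hcdef]
    field_simp
  -- the step hypothesis for pathLift
  have hstep : ∀ t t' s : ℝ, |t' - t| ≤ c →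
      0 < (f (t', s) * (starRingEnd ℂ) (f (t, s))).re := by
    intro t t' s hd
    set pt : ℝ := (projIcc 0 T hle t : ℝ) with hpt
    set pt' : ℝ := (projIcc 0 T hle t' : ℝ) with hpt'
    have hlip : |pt' - pt| ≤ |t' - t| := by
      have h1 := (LipschitzWith.projIcc (a := (0:ℝ)) (b := T) hle).dist_le_mul t' t
      rw [Subtype.dist_eq, Real.dist_eq, Real.dist_eq] at h1
      simpa using h1
    set k : ℤ := ⌊s / (2 * Real.pi)⌋ with hk
    set s' : ℝ := s - k * (2 * Real.pi) with hs'
    have hs'mem : s' ∈ Icc (0:ℝ) (2 * Real.pi) := by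
      constructor
      · have h1 := Int.floor_le (s / (2 * Real.pi))
        rw [hs']
        have h2 : (k : ℝ) * (2 * Real.pi) ≤ s := by
          rw [hk]
          calc (⌊s / (2 * Real.pi)⌋ : ℝ) * (2 * Real.pi)
              ≤ s / (2 * Real.pi) * (2 * Real.pi) :=
                mul_le_mul_of_nonneg_right h1 h2pi.le
            _ = s := by field_simp
        linarith
      · have h1 := Int.lt_floor_add_one (s / (2 * Real.pi))
        rw [hs']
        have h2 : s < ((k : ℝ) + 1) * (2 * Real.pi) := by
          rw [hk]
          calc s = s / (2 * Real.pi) * (2 * Real.pi) := by field_simp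
            _ < ((⌊s / (2 * Real.pi)⌋ : ℝ) + 1) * (2 * Real.pi) :=
                mul_lt_mul_of_pos_right h1 h2pi
        nlinarith
    have hfs : ∀ τ : ℝ, f (τ, s) = f (τ, s') := by
      intro τ
      have h3 : s = s' + (k : ℝ) * (2 * Real.pi) := by rw [hs']; ring
      rw [h3, hper2]
    have hft : f (t, s') = f (pt, s') := hproj t s'
    have hft' : f (t', s') = f (pt', s') := hproj t' s'
    rw [hfs t, hfs t', hft, hft']
    exact hδkey pt (projIcc 0 T hle t).2 pt' (projIcc 0 T hle t').2 s' hs'mem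
      (lt_of_le_of_lt (le_trans hlip hd) hcδ)
  -- the lift and its properties
  have hLcont : Continuous fun p : ℝ × ℝ => pathLift f c n p.1 p.2 :=
    pathLift_continuous f c hcpos.le n hfcont hfne hstep
  have hLspec : ∀ s : ℝ, ∀ t ∈ Icc (0:ℝ) T,
      Complex.exp (pathLift f c n t s * Complex.I) = f (t, s) / ‖f (t, s)‖ := by
    intro s t ht
    exact pathLift_spec f c hcpos.le n hfne h0 s n le_rfl t ⟨ht.1, by rw [hnc]; exact ht.2⟩
  have hL0 : ∀ s : ℝ, pathLift f c n 0 s = s := pathLift_zero f c hcpos.le n hfne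
  have hLpi : ∀ t s : ℝ, pathLift f c n t (s + Real.pi) = pathLift f c n t s + Real.pi :=
    pathLift_pi f c n hshift
  have hfrep : ∀ s : ℝ, ∀ t ∈ Icc (0:ℝ) T,
      (f (t, s)).re = ‖f (t, s)‖ * Real.cos (pathLift f c n t s) ∧
      (f (t, s)).im = ‖f (t, s)‖ * Real.sin (pathLift f c n t s) := by
    intro s t ht
    have habs : (‖f (t, s)‖ : ℂ) ≠ 0 := by
      exact_mod_cast norm_ne_zero_iff.mpr (hfne _)
    have heq : f (t, s) = (‖f (t, s)‖ : ℂ)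
        * Complex.exp (pathLift f c n t s * Complex.I) := by
      rw [hLspec s t ht]
      field_simp
    constructor
    · conv_lhs => rw [heq]
      rw [Complex.re_ofReal_mul, Complex.exp_ofReal_mul_I_re]
    · conv_lhs => rw [heq]
      rw [Complex.im_ofReal_mul, Complex.exp_ofReal_mul_I_im]
  -- the angle of a nonzero vector
  set α : (Fin 2 → ℝ) → ℝ := fun u => Complex.arg ((u 0 : ℂ) + (u 1 : ℂ) * Complex.I) with hα
  have hz : ∀ u : Fin 2 → ℝ, u ≠ 0 → ((u 0 : ℂ) + (u 1 : ℂ) * Complex.I) ≠ 0 := by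
    intro u hu h
    apply hu
    have h1 : u 0 = 0 := by
      have := congrArg Complex.re h
      simpa using this
    have h2 : u 1 = 0 := by
      have := congrArg Complex.im h
      simpa using this
    funext i
    fin_cases i
    · exact h1
    · exact h2
  have hpolar : ∀ u : Fin 2 → ℝ, u ≠ 0 →
      u 0 = ‖(u 0 : ℂ) + (u 1 : ℂ) * Complex.I‖ * Real.cos (α u) ∧
      u 1 = ‖(u 0 : ℂ) + (u 1 : ℂ) * Complex.I‖ * Real.sin (α u) := by
    intro u hu
    constructor
    · have h1 := Complex.norm_mul_cos_arg ((u 0 : ℂ) + (u 1 : ℂ) * Complex.I)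
      rw [hα]
      simp only at h1 ⊢
      rw [h1]
      simp
    · have h1 := Complex.norm_mul_sin_arg ((u 0 : ℂ) + (u 1 : ℂ) * Complex.I)
      rw [hα]
      simp only at h1 ⊢
      rw [h1]
      simp
  -- the argument lift of a nonzero vector
  have hlift : ∀ u : Fin 2 → ℝ, u ≠ 0 → IsArgLift M T u (fun t => pathLift f c n t (α u)) := by
    intro u hu
    constructor
    · exact (hLcont.comp (continuous_id.prodMk continuous_const)).continuousOn
    · intro t ht
      set s : ℝ := α u with hs
      set r : ℝ := ‖(u 0 : ℂ) + (u 1 : ℂ) * Complex.I‖ with hr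
      have hrpos : 0 < r := norm_pos_iff.mpr (hz u hu)
      have hu0 : u 0 = r * Real.cos s := (hpolar u hu).1
      have hu1 : u 1 = r * Real.sin s := (hpolar u hu).2
      have hx : (M t).mulVec u 0 = r * (f (t, s)).re := by
        rw [(mulVec_entry _ _).1, ← hMceq t ht, hfre, hu0, hu1]
        ring
      have hy : (M t).mulVec u 1 = r * (f (t, s)).im := by
        rw [(mulVec_entry _ _).2, ← hMceq t ht, hfim, hu0, hu1]
        ring
      have habs : Real.sqrt (((M t).mulVec u 0) ^ 2 + ((M t).mulVec u 1) ^ 2)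
          = r * ‖f (t, s)‖ := by
        rw [hx, hy]
        have h1 : (r * (f (t, s)).re) ^ 2 + (r * (f (t, s)).im) ^ 2
            = r ^ 2 * ((f (t, s)).re ^ 2 + (f (t, s)).im ^ 2) := by ring
        rw [h1, Real.sqrt_mul (sq_nonneg r), Real.sqrt_sq hrpos.le]
        congr 1
        rw [Complex.norm_def, Complex.normSq_apply]
        ring_nf
      rw [habs, hx, hy]
      have hrep := hfrep s t ht
      rw [hrep.1, hrep.2]
      constructor <;> ring
  -- the rotation number
  set Δ : (Fin 2 → ℝ) → ℝ := fun u => (pathLift f c n T (α u) - α u) / (2 * Real.pi) with hΔ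
  refine ⟨Δ, fun u hu => ⟨_, hlift u hu⟩, ?_, ?_⟩
  · -- independence of the choice of lift
    intro u hu θ hθ
    have hθu := hlift u hu
    have hkey : θ T - θ 0 = pathLift f c n T (α u) - pathLift f c n 0 (α u) := by
      apply arglift_unique T hT θ (fun t => pathLift f c n t (α u)) hθ.1 hθu.1
      intro t ht
      have hxy := mulVec_ne_zero (M t) (hdet t ht) u hu
      have e1 := arglift_exp hxy (hθ.2 t ht).1 (hθ.2 t ht).2
      have e2 := arglift_exp hxy (hθu.2 t ht).1 (hθu.2 t ht).2
      rw [e1, e2]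
    rw [hΔ]
    dsimp only
    rw [hkey, hL0]
  · -- the image is a compact interval of length < 1/2
    set Δc : ℝ → ℝ := fun s => (pathLift f c n T s - s) / (2 * Real.pi) with hΔc
    have hΔeq : ∀ u : Fin 2 → ℝ, Δ u = Δc (α u) := fun u => rfl
    have hΔccont : Continuous Δc := by
      apply Continuous.div_const
      exact (hLcont.comp (continuous_const.prodMk continuous_id)).sub continuous_id
    have hΔcper : ∀ s : ℝ, Δc (s + Real.pi) = Δc s := by
      intro s
      rw [hΔc]
      dsimp only
      rw [hLpi]
      ring
    have hΔcperiodic : Function.Periodic Δc Real.pi := hΔcper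
    have himg : Δ '' {u : Fin 2 → ℝ | u ≠ 0} = Δc '' Icc (-Real.pi) Real.pi := by
      apply subset_antisymm
      · rintro y ⟨u, hu, rfl⟩
        exact ⟨α u, Ioc_subset_Icc_self (Complex.arg_mem_Ioc _), (hΔeq u).symm⟩
      · rintro y ⟨s, hs, rfl⟩
        rcases eq_or_lt_of_le hs.1 with hs1 | hs1
        · refine ⟨![1, 0], ?_, ?_⟩
          · intro h0
            have := congrFun h0 0
            simpa using this
          · have hα0 : α ![1, 0] = 0 := by
              rw [hα]
              norm_num
            rw [hΔeq, hα0]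
            have h1 := hΔcper (-Real.pi)
            rw [neg_add_cancel] at h1
            rw [h1, hs1]
        · refine ⟨![Real.cos s, Real.sin s], ?_, ?_⟩
          · intro h0
            have h1 := congrFun h0 0
            have h2 := congrFun h0 1
            simp at h1 h2
            nlinarith [Real.sin_sq_add_cos_sq s]
          · rw [hΔeq]
            congr 1
            rw [hα]
            norm_num
            exact Complex.arg_cos_add_sin_mul_I ⟨hs1, hs.2⟩
    have hIccne : (Icc (-Real.pi) Real.pi).Nonempty := ⟨0, by constructor <;> linarith⟩
    obtain ⟨s1, hs1K, hs1min⟩ := isCompact_Icc.exists_isMinOn hIccne hΔccont.continuousOn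
    obtain ⟨s2, hs2K, hs2max⟩ := isCompact_Icc.exists_isMaxOn hIccne hΔccont.continuousOn
    refine ⟨Δc s1, Δc s2, hs1min hs2K, ?_, ?_⟩
    · -- length < 1/2
      rcases eq_or_ne (Real.sin (s2 - s1)) 0 with hsin | hsin
      · obtain ⟨k, hk⟩ := Real.sin_eq_zero_iff.mp hsin
        have heq : Δc s2 = Δc s1 := by
          rw [show s2 = s1 + (k : ℝ) * Real.pi by linarith]
          exact (hΔcperiodic.int_mul k) s1
        rw [heq]
        norm_num
      · set φ : ℝ → ℝ := fun t => pathLift f c n t s2 - pathLift f c n t s1 with hφ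
        have hφcont : Continuous φ :=
          (hLcont.comp (continuous_id.prodMk continuous_const)).sub
            (hLcont.comp (continuous_id.prodMk continuous_const))
        have hφ0 : φ 0 = s2 - s1 := by
          rw [hφ]
          dsimp only
          rw [hL0, hL0]
        have hsinφ : ∀ t ∈ Icc (0:ℝ) T, Real.sin (φ t) ≠ 0 := by
          intro t ht
          have h1 := hfrep s1 t ht
          have h2 := hfrep s2 t ht
          have hdet2 : Mc t 0 0 * Mc t 1 1 - Mc t 0 1 * Mc t 1 0 = 1 := by
            have := hMcdet t
            rwa [Matrix.det_fin_two] at this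
          have hcross : (f (t, s1)).re * (f (t, s2)).im - (f (t, s1)).im * (f (t, s2)).re
              = Real.sin (s2 - s1) := by
            rw [hfre, hfim, hfre, hfim, Real.sin_sub]
            linear_combination (Real.sin s2 * Real.cos s1 - Real.cos s2 * Real.sin s1) * hdet2
          rw [h1.1, h1.2, h2.1, h2.2] at hcross
          intro hz0
          apply hsin
          have h3 : Real.sin (s2 - s1) = ‖f (t, s1)‖ * ‖f (t, s2)‖
              * Real.sin (φ t) := by
            rw [← hcross, hφ]
            dsimp only
            rw [Real.sin_sub]
            ring
          rw [h3, hz0, mul_zero]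
        have h0mem : (0:ℝ) ∈ Icc (0:ℝ) T := ⟨le_rfl, hle⟩
        have hTmem : T ∈ Icc (0:ℝ) T := ⟨hle, le_rfl⟩
        set k : ℤ := ⌊φ 0 / Real.pi⌋ with hk
        have hk1 : (k : ℝ) * Real.pi ≤ φ 0 := by
          have h1 := Int.floor_le (φ 0 / Real.pi)
          calc (k : ℝ) * Real.pi ≤ φ 0 / Real.pi * Real.pi :=
              mul_le_mul_of_nonneg_right h1 hπ.le
            _ = φ 0 := by field_simp
        have hk2 : φ 0 < ((k : ℝ) + 1) * Real.pi := by
          have h1 := Int.lt_floor_add_one (φ 0 / Real.pi)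
          calc φ 0 = φ 0 / Real.pi * Real.pi := by field_simp
            _ < ((k : ℝ) + 1) * Real.pi := mul_lt_mul_of_pos_right h1 hπ
        have hk1' : (k : ℝ) * Real.pi < φ 0 := by
          rcases lt_or_eq_of_le hk1 with h | h
          · exact h
          · exact absurd (by rw [← h]; exact Real.sin_int_mul_pi k) (hsinφ 0 h0mem)
        have hIoo : ∀ t ∈ Icc (0:ℝ) T,
            φ t ∈ Ioo ((k : ℝ) * Real.pi) (((k : ℝ) + 1) * Real.pi) := by
          intro t ht
          by_contra hcon
          have hsub : uIcc (0:ℝ) t ⊆ Icc (0:ℝ) T := by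
            rw [uIcc_of_le ht.1]
            exact Icc_subset_Icc le_rfl ht.2
          have hφconOn : ContinuousOn φ (uIcc (0:ℝ) t) := hφcont.continuousOn
          rw [mem_Ioo, not_and_or, not_lt, not_lt] at hcon
          rcases hcon with hcase | hcase
          · have hmem : (k : ℝ) * Real.pi ∈ uIcc (φ 0) (φ t) := by
              rw [Set.uIcc, Set.mem_Icc]
              exact ⟨le_trans (min_le_right _ _) hcase, le_trans hk1 (le_max_left _ _)⟩
            obtain ⟨τ, hτ, hτeq⟩ := intermediate_value_uIcc hφconOn hmem
            exact hsinφ τ (hsub hτ) (by rw [hτeq]; exact Real.sin_int_mul_pi k)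
          · have hmem : ((k : ℝ) + 1) * Real.pi ∈ uIcc (φ 0) (φ t) := by
              rw [Set.uIcc, Set.mem_Icc]
              exact ⟨le_trans (min_le_left _ _) hk2.le, le_trans hcase (le_max_right _ _)⟩
            obtain ⟨τ, hτ, hτeq⟩ := intermediate_value_uIcc hφconOn hmem
            refine hsinφ τ (hsub hτ) ?_
            rw [hτeq]
            have h6 := Real.sin_int_mul_pi (k + 1)
            push_cast at h6
            exact h6
        have hT2 := hIoo T hTmem
        have hΔdiff : Δc s2 - Δc s1 = (φ T - φ 0) / (2 * Real.pi) := by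
          rw [hΔc, hφ0, hφ]
          dsimp only
          ring
        rw [hΔdiff]
        have h4 : φ T - φ 0 < Real.pi := by
          have h5 := hT2.2
          linarith
        have h7 : Real.pi / (2 * Real.pi) = 1 / 2 := by
          rw [div_eq_iff h2pi.ne']
          ring
        calc (φ T - φ 0) / (2 * Real.pi) < Real.pi / (2 * Real.pi) :=
              (div_lt_div_iff_of_pos_right h2pi).mpr h4
          _ = 1 / 2 := h7
    · -- image equals the interval
      rw [himg]
      apply subset_antisymm
      · rintro y ⟨s, hsK, rfl⟩
        exact ⟨hs1min hsK, hs2max hsK⟩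
      · intro y hy
        have hab : Δc s1 ≤ Δc s2 := hs1min hs2K
        have hy' : y ∈ uIcc (Δc s1) (Δc s2) := by
          rw [Set.uIcc, Set.mem_Icc]
          exact ⟨le_trans (min_le_left _ _) hy.1, le_trans hy.2 (le_max_right _ _)⟩
        have hsub : uIcc s1 s2 ⊆ Icc (-Real.pi) Real.pi := by
          rw [Set.uIcc]
          exact Icc_subset_Icc (le_min hs1K.1 hs2K.1) (max_le hs1K.2 hs2K.2)
        obtain ⟨s, hsmem, rfl⟩ := intermediate_value_uIcc (hΔccont.continuousOn) hy'
        exact ⟨s, hsub hsmem, rfl⟩
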